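/- For any matroid M of rank r on ground set E, the matroid polytope satisfies the signed Minkowski sum decomposition P_M = Σ_{A⊆E} β̃(M/A) Δ_{E−A}, i.e., P_M + Σ_{A : β̃(M/A)<0} (−β̃(M/A)) Δ_{E−A} = Σ_{A : β̃(M/A)≥0} β̃(M/A) Δ_{E−A}. -/

import Mathlib

open Finset
open scoped Pointwise Classical

/-- The 0/1 indicator vector of a finite set `B`. -/
def indic {α : Type*} [DecidableEq α] (B : Finset α) : α → ℝ :=
  fun a => if a ∈ B then 1 else 0

/-- The matroid polytope: convex hull of the indicator vectors of the bases. -/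
def matroidPolytope {α : Type*} [DecidableEq α] (E : Finset α) (r : Finset α → ℕ) :
    Set (α → ℝ) :=
  convexHull ℝ {x | ∃ B : Finset α, B ⊆ E ∧ B.card = r E ∧ r B = r E ∧ x = indic B}

/-- `Δ_J = conv{e_i : i ∈ J}`. -/
def simplexFace {α : Type*} [DecidableEq α] (J : Finset α) : Set (α → ℝ) :=
  convexHull ℝ {x | ∃ i ∈ J, x = Pi.single i (1 : ℝ)}

/-- The beta invariant `β(M) = (−1)^{r(G)} ∑_{X⊆G} (−1)^{|X|} ρ(X)` of the matroid
with ground set `G` and rank function `ρ`. -/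
def betaInv {α : Type*} [DecidableEq α] (G : Finset α) (ρ : Finset α → ℕ) : ℤ :=
  (-1) ^ (ρ G) * ∑ X ∈ G.powerset, (-1) ^ X.card * (ρ X : ℤ)

/-- The signed beta invariant `β̃(M) = (−1)^{r(M)+1} β(M)`. -/
def betaT {α : Type*} [DecidableEq α] (G : Finset α) (ρ : Finset α → ℕ) : ℤ :=
  (-1) ^ (ρ G + 1) * betaInv G ρ

/-- The rank function of the contraction `M/A`. -/
def contr {α : Type*} [DecidableEq α] (r : Finset α → ℕ) (A : Finset α) :
    Finset α → ℕ :=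
  fun X => r (A ∪ X) - r A



set_option linter.unusedSectionVars false
section Rank
variable {α : Type*} [DecidableEq α] {r : Finset α → ℕ}

lemma rkEmpty (hcard : ∀ A, r A ≤ A.card) : r ∅ = 0 :=
  Nat.le_zero.mp (by simpa using hcard ∅)

lemma rkSingle (hcard : ∀ A, r A ≤ A.card) (e : α) : r {e} ≤ 1 := by
  simpa using hcard {e}

lemma rkUnionLe (hsub : ∀ A B, r (A ∪ B) + r (A ∩ B) ≤ r A + r B)
    (X Y : Finset α) : r (X ∪ Y) ≤ r X + r Y :=
  le_trans (Nat.le_add_right _ _) (hsub X Y)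

lemma rkIndepSubset (hcard : ∀ A, r A ≤ A.card)
    (hsub : ∀ A B, r (A ∪ B) + r (A ∩ B) ≤ r A + r B)
    {B C : Finset α} (hB : r B = B.card) (hCB : C ⊆ B) : r C = C.card := by
  have h1 : r (C ∪ (B \ C)) ≤ r C + r (B \ C) := rkUnionLe hsub _ _
  have h2 : C ∪ (B \ C) = B := Finset.union_sdiff_of_subset hCB
  have h3 : r (B \ C) ≤ (B \ C).card := hcard _
  have h4 : (B \ C).card = B.card - C.card := Finset.card_sdiff_of_subset hCB
  have h5 : C.card ≤ B.card := Finset.card_le_card hCB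
  have h6 : r C ≤ C.card := hcard _
  rw [h2] at h1
  omega

lemma rkLoop (hmono : ∀ A B, A ⊆ B → r A ≤ r B)
    (hsub : ∀ A B, r (A ∪ B) + r (A ∩ B) ≤ r A + r B)
    {e : α} (he : r {e} = 0) (X : Finset α) : r ({e} ∪ X) = r X := by
  have h1 : r ({e} ∪ X) ≤ r {e} + r X := rkUnionLe hsub _ _
  have h2 : r X ≤ r ({e} ∪ X) := hmono _ _ (Finset.subset_union_right)
  omega

lemma rkSpan (hmono : ∀ A B, A ⊆ B → r A ≤ r B)
    (hsub : ∀ A B, r (A ∪ B) + r (A ∩ B) ≤ r A + r B)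
    (S : Finset α) (T : Finset α) (hT : ∀ x ∈ T, r (insert x S) = r S) :
    r (S ∪ T) = r S := by
  induction T using Finset.induction_on with
  | empty => simp
  | @insert a T' ha ih =>
    have hih : r (S ∪ T') = r S := ih (fun x hx => hT x (Finset.mem_insert_of_mem hx))
    have hx : r (insert a S) = r S := hT a (Finset.mem_insert_self a T')
    have hXY : (S ∪ T') ∪ insert a S = S ∪ insert a T' := by
      ext x; simp [Finset.mem_union, Finset.mem_insert]; tauto
    have hsubXY : S ⊆ (S ∪ T') ∩ insert a S := by
      intro x hx
      simp [Finset.mem_inter, Finset.mem_union, Finset.mem_insert, hx]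
    have h1 := hsub (S ∪ T') (insert a S)
    have h2 : r S ≤ r ((S ∪ T') ∩ insert a S) := hmono _ _ hsubXY
    have h3 : r S ≤ r (S ∪ insert a T') := hmono _ _ Finset.subset_union_left
    rw [hXY] at h1
    omega

lemma rkAugment (hcard : ∀ A, r A ≤ A.card)
    (hmono : ∀ A B, A ⊆ B → r A ≤ r B)
    (hsub : ∀ A B, r (A ∪ B) + r (A ∩ B) ≤ r A + r B)
    {E I : Finset α} (hIE : I ⊆ E) (hlt : r I < r E) :
    ∃ x ∈ E, x ∉ I ∧ r (insert x I) = r I + 1 := by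
  by_contra h
  push_neg at h
  have hall : ∀ x ∈ E, r (insert x I) = r I := by
    intro x hx
    by_cases hxI : x ∈ I
    · rw [Finset.insert_eq_self.mpr hxI]
    · have h1 : r (insert x I) ≤ r I + r {x} := by
        have := rkUnionLe hsub {x} I
        rwa [← Finset.insert_eq, add_comm] at this
      have h2 : r I ≤ r (insert x I) := hmono _ _ (Finset.subset_insert _ _)
      have h3 : r {x} ≤ 1 := rkSingle hcard x
      have h4 := h x hx hxI
      omega
  have : r (I ∪ E) = r I := rkSpan hmono hsub I E hall
  rw [Finset.union_eq_right.mpr hIE] at this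
  omega

lemma rkDrops (hsub : ∀ A B, r (A ∪ B) + r (A ∩ B) ≤ r A + r B)
    (C : Finset α) (B0 : Finset α) :
    (∀ b ∈ B0, r (C.erase b) + 1 ≤ r C) → B0 ⊆ C → r (C \ B0) + B0.card ≤ r C := by
  induction B0 using Finset.induction_on with
  | empty => intro _ _; simp
  | @insert a B' ha ih =>
    intro hdrop hsubC
    have hih := ih (fun b hb => hdrop b (Finset.mem_insert_of_mem hb))
      (fun b hb => hsubC (Finset.mem_insert_of_mem hb))
    have hXY : (C \ B') ∪ C.erase a = C := by
      ext x
      simp only [Finset.mem_union, Finset.mem_sdiff, Finset.mem_erase]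
      constructor
      · rintro (⟨h1, _⟩ | ⟨_, h1⟩) <;> exact h1
      · intro hx
        by_cases hxa : x = a
        · subst hxa; exact Or.inl ⟨hx, ha⟩
        · by_cases hxB : x ∈ B'
          · exact Or.inr ⟨hxa, hx⟩
          · exact Or.inl ⟨hx, hxB⟩
    have hI : (C \ B') ∩ C.erase a = C \ insert a B' := by
      ext x
      simp only [Finset.mem_inter, Finset.mem_sdiff, Finset.mem_erase, Finset.mem_insert]
      tauto
    have h1 := hsub (C \ B') (C.erase a)
    rw [hXY, hI] at h1
    have h2 := hdrop a (Finset.mem_insert_self a B')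
    have h3 : (insert a B').card = B'.card + 1 := Finset.card_insert_of_notMem ha
    omega

end Rank

section ContrBeta
variable {α : Type*} [DecidableEq α] {r : Finset α → ℕ}

lemma contr_card (hcard : ∀ A, r A ≤ A.card)
    (hsub : ∀ A B, r (A ∪ B) + r (A ∩ B) ≤ r A + r B)
    (A : Finset α) : ∀ X, contr r A X ≤ X.card := by
  intro X
  have h1 : r (A ∪ X) ≤ r A + r X := rkUnionLe hsub A X
  have h2 : r X ≤ X.card := hcard X
  simp only [contr]
  omega

lemma contr_mono (hmono : ∀ A B, A ⊆ B → r A ≤ r B) (A : Finset α) :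
    ∀ X Y, X ⊆ Y → contr r A X ≤ contr r A Y := fun _ _ h =>
  Nat.sub_le_sub_right (hmono _ _ (Finset.union_subset_union_right h)) _

lemma contr_sub (hmono : ∀ A B, A ⊆ B → r A ≤ r B)
    (hsub : ∀ A B, r (A ∪ B) + r (A ∩ B) ≤ r A + r B) (A : Finset α) :
    ∀ X Y, contr r A (X ∪ Y) + contr r A (X ∩ Y) ≤ contr r A X + contr r A Y := by
  intro X Y
  have h1 := hsub (A ∪ X) (A ∪ Y)
  have e1 : (A ∪ X) ∪ (A ∪ Y) = A ∪ (X ∪ Y) := by ext x; simp; tauto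
  have e2 : (A ∪ X) ∩ (A ∪ Y) = A ∪ (X ∩ Y) := by ext x; simp; tauto
  rw [e1, e2] at h1
  have h2 : r A ≤ r (A ∪ (X ∩ Y)) := hmono _ _ Finset.subset_union_left
  have h3 : r A ≤ r (A ∪ X) := hmono _ _ Finset.subset_union_left
  have h4 : r A ≤ r (A ∪ Y) := hmono _ _ Finset.subset_union_left
  have h5 : r (A ∪ (X ∩ Y)) ≤ r (A ∪ (X ∪ Y)) := hmono _ _ (Finset.union_subset_union_right (Finset.inter_subset_union))
  show r (A ∪ (X ∪ Y)) - r A + (r (A ∪ (X ∩ Y)) - r A) ≤ (r (A ∪ X) - r A) + (r (A ∪ Y) - r A)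
  omega

lemma contr_contr (hmono : ∀ A B, A ⊆ B → r A ≤ r B)
    {e : α} {A : Finset α} (he : e ∈ A) (X : Finset α) :
    contr (contr r {e}) (A.erase e) X = contr r A X := by
  unfold contr
  have e1 : {e} ∪ (A.erase e ∪ X) = A ∪ X := by
    ext x; simp [Finset.mem_erase]
    constructor
    · rintro (h | ⟨_, h⟩ | h) <;> [exact Or.inl (h ▸ he); exact Or.inl h; exact Or.inr h]
    · intro h
      rcases h with h | h
      · by_cases hx : x = e
        · exact Or.inl hx
        · exact Or.inr (Or.inl ⟨hx, h⟩)
      · exact Or.inr (Or.inr h)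
  have e2 : {e} ∪ A.erase e = A := by
    ext x; simp [Finset.mem_erase]
    constructor
    · rintro (h | ⟨_, h⟩) <;> [exact h ▸ he; exact h]
    · intro h
      by_cases hx : x = e
      · exact Or.inl hx
      · exact Or.inr ⟨hx, h⟩
  rw [e1, e2]
  have h1 : r {e} ≤ r A := by
    apply hmono; intro x hx; rw [Finset.mem_singleton] at hx; exact hx ▸ he
  have h2 : r A ≤ r (A ∪ X) := hmono _ _ Finset.subset_union_left
  omega

lemma betaT_eq (G : Finset α) (ρ : Finset α → ℕ) :
    betaT G ρ = ∑ X ∈ G.powerset, (-1 : ℤ) ^ (X.card + 1) * (ρ X : ℤ) := by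
  unfold betaT betaInv
  rw [← mul_assoc]
  have h : ((-1 : ℤ)) ^ (ρ G + 1) * (-1) ^ (ρ G) = -1 := by
    rw [← pow_add]
    exact Odd.neg_one_pow ⟨ρ G, by ring⟩
  rw [h, Finset.mul_sum]
  refine Finset.sum_congr rfl fun X _ => ?_
  rw [pow_succ]
  ring

lemma betaSum (hcard : ∀ A, r A ≤ A.card)
    (hmono : ∀ A B, A ⊆ B → r A ≤ r B)
    {E : Finset α} {e : α} (he : e ∈ E) :
    ∑ A ∈ (E.erase e).powerset, betaT (E \ A) (contr r A) = (r {e} : ℤ) := by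
  have step1 : ∀ A ∈ (E.erase e).powerset,
      betaT (E \ A) (contr r A)
        = ∑ X ∈ (E \ A).powerset, (-1 : ℤ) ^ (X.card + 1) * ((r (A ∪ X) : ℤ) - r A) := by
    intro A hA
    rw [Finset.mem_powerset] at hA
    have heA : e ∈ E \ A := by
      rw [Finset.mem_sdiff]
      exact ⟨he, fun h => (Finset.mem_erase.mp (hA h)).1 rfl⟩
    rw [betaT_eq]
    have split : ∀ X : Finset α, ((contr r A X : ℤ)) = (r (A ∪ X) : ℤ) - r A := by
      intro X
      unfold contr
      have := hmono A (A ∪ X) Finset.subset_union_left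
      push_cast [Nat.cast_sub this]
      ring
    exact Finset.sum_congr rfl fun X _ => by rw [split]
  rw [Finset.sum_congr rfl step1]
  have step2 : ∀ A ∈ (E.erase e).powerset,
      ∑ X ∈ (E \ A).powerset, (-1 : ℤ) ^ (X.card + 1) * ((r (A ∪ X) : ℤ) - r A)
        = ∑ X ∈ (E \ A).powerset, (-1 : ℤ) ^ (X.card + 1) * (r (A ∪ X) : ℤ) := by
    intro A hA
    rw [Finset.mem_powerset] at hA
    have heA : e ∈ E \ A := by
      rw [Finset.mem_sdiff]
      exact ⟨he, fun h => (Finset.mem_erase.mp (hA h)).1 rfl⟩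
    have hne : (E \ A).Nonempty := ⟨e, heA⟩
    have hz : ∑ X ∈ (E \ A).powerset, (-1 : ℤ) ^ (X.card + 1) * (r A : ℤ) = 0 := by
      have h0 := Finset.sum_powerset_neg_one_pow_card_of_nonempty (x := E \ A) hne
      have : ∑ X ∈ (E \ A).powerset, (-1 : ℤ) ^ (X.card + 1) * (r A : ℤ)
          = (∑ X ∈ (E \ A).powerset, (-1 : ℤ) ^ X.card) * (-(r A : ℤ)) := by
        rw [Finset.sum_mul]
        refine Finset.sum_congr rfl fun X _ => ?_
        rw [pow_succ]; ring
      rw [this, h0, zero_mul]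
    calc ∑ X ∈ (E \ A).powerset, (-1 : ℤ) ^ (X.card + 1) * ((r (A ∪ X) : ℤ) - r A)
        = ∑ X ∈ (E \ A).powerset, ((-1 : ℤ) ^ (X.card + 1) * (r (A ∪ X) : ℤ)
            - (-1 : ℤ) ^ (X.card + 1) * (r A : ℤ)) := by
          refine Finset.sum_congr rfl fun X _ => by ring
      _ = _ := by rw [Finset.sum_sub_distrib, hz, sub_zero]
  rw [Finset.sum_congr rfl step2]
  -- reindex inner sum : X ↦ Y = A ∪ X
  have step3 : ∀ A ∈ (E.erase e).powerset,
      ∑ X ∈ (E \ A).powerset, (-1 : ℤ) ^ (X.card + 1) * (r (A ∪ X) : ℤ)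
        = ∑ Y ∈ E.powerset.filter (fun Y => A ⊆ Y),
            (-1 : ℤ) ^ ((Y.card - A.card) + 1) * (r Y : ℤ) := by
    intro A hA
    rw [Finset.mem_powerset] at hA
    have hAE : A ⊆ E := hA.trans (Finset.erase_subset _ _)
    refine Finset.sum_nbij' (fun X => A ∪ X) (fun Y => Y \ A) ?_ ?_ ?_ ?_ ?_
    · intro X hX
      rw [Finset.mem_powerset] at hX
      rw [Finset.mem_filter, Finset.mem_powerset]
      exact ⟨Finset.union_subset hAE (hX.trans (Finset.sdiff_subset)), Finset.subset_union_left⟩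
    · intro Y hY
      rw [Finset.mem_filter, Finset.mem_powerset] at hY
      rw [Finset.mem_powerset]
      exact Finset.sdiff_subset_sdiff hY.1 Subset.rfl
    · intro X hX
      rw [Finset.mem_powerset] at hX
      have : X ∩ A = ∅ := by
        rw [← Finset.disjoint_iff_inter_eq_empty]
        exact Finset.disjoint_left.mpr fun x hx => (Finset.mem_sdiff.mp (hX hx)).2
      show (A ∪ X) \ A = X
      rw [Finset.union_sdiff_cancel_left]
      rwa [Finset.disjoint_iff_inter_eq_empty, Finset.inter_comm]
    · intro Y hY
      rw [Finset.mem_filter, Finset.mem_powerset] at hY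
      show A ∪ (Y \ A) = Y
      exact Finset.union_sdiff_of_subset hY.2
    · intro X hX
      rw [Finset.mem_powerset] at hX
      have hdisj : Disjoint A X :=
        Finset.disjoint_left.mpr fun x hx hx2 => (Finset.mem_sdiff.mp (hX hx2)).2 hx
      have hcardeq : (A ∪ X).card = A.card + X.card := Finset.card_union_of_disjoint hdisj
      rw [hcardeq]
      congr 2
      omega
  rw [Finset.sum_congr rfl step3]
  -- swap the two sums
  rw [Finset.sum_comm' (s' := fun Y => (Y.erase e).powerset) (t' := E.powerset)
    (by
      intro A Y
      simp only [Finset.mem_powerset, Finset.mem_filter]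
      constructor
      · rintro ⟨hAe, hYE, hAY⟩
        refine ⟨fun x hx => Finset.mem_erase.mpr
          ⟨(Finset.mem_erase.mp (hAe hx)).1, hAY hx⟩, hYE⟩
      · rintro ⟨hAY, hYE⟩
        exact ⟨fun x hx => Finset.mem_erase.mpr
          ⟨(Finset.mem_erase.mp (hAY hx)).1, hYE (Finset.mem_of_mem_erase (hAY hx))⟩,
          hYE, fun x hx => Finset.mem_of_mem_erase (hAY hx)⟩)]
  -- inner sum over A vanishes unless Y.erase e = ∅
  have step4 : ∀ Y ∈ E.powerset,
      ∑ A ∈ (Y.erase e).powerset, (-1 : ℤ) ^ ((Y.card - A.card) + 1) * (r Y : ℤ)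
        = if Y.erase e = ∅ then -((-1 : ℤ) ^ Y.card) * (r Y : ℤ) else 0 := by
    intro Y _
    have hsign : ∀ A ∈ (Y.erase e).powerset,
        (-1 : ℤ) ^ ((Y.card - A.card) + 1) = -((-1 : ℤ) ^ Y.card * (-1 : ℤ) ^ A.card) := by
      intro A hA
      rw [Finset.mem_powerset] at hA
      have hle : A.card ≤ Y.card :=
        Finset.card_le_card (hA.trans (Finset.erase_subset _ _))
      have : (-1 : ℤ) ^ (Y.card - A.card) * (-1 : ℤ) ^ A.card = (-1 : ℤ) ^ Y.card := by
        rw [← pow_add]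
        congr 1
        omega
      have hsq : (-1 : ℤ) ^ A.card * (-1 : ℤ) ^ A.card = 1 := by
        rw [← pow_add, Even.neg_one_pow ⟨A.card, by ring⟩]
      calc (-1 : ℤ) ^ ((Y.card - A.card) + 1)
          = ((-1 : ℤ) ^ (Y.card - A.card) * (-1) ^ A.card) * (-1) ^ A.card * (-1) := by
            rw [pow_succ, mul_assoc ((-1:ℤ) ^ (Y.card - A.card))]
            rw [hsq]
            ring
        _ = -((-1 : ℤ) ^ Y.card * (-1 : ℤ) ^ A.card) := by rw [this]; ring
    rw [Finset.sum_congr rfl (fun A hA => by rw [hsign A hA])]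
    have : ∑ A ∈ (Y.erase e).powerset, -((-1 : ℤ) ^ Y.card * (-1 : ℤ) ^ A.card) * (r Y : ℤ)
        = -((-1 : ℤ) ^ Y.card) * (r Y : ℤ) * (∑ A ∈ (Y.erase e).powerset, (-1 : ℤ) ^ A.card) := by
      rw [Finset.mul_sum]
      exact Finset.sum_congr rfl fun A _ => by ring
    rw [this, Finset.sum_powerset_neg_one_pow_card]
    split_ifs with h
    · ring
    · ring
  rw [Finset.sum_congr rfl step4, ← Finset.sum_filter]
  have hfe : E.powerset.filter (fun Y => Y.erase e = ∅) = {∅, {e}} := by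
    ext Y
    simp only [Finset.mem_filter, Finset.mem_powerset, Finset.mem_insert,
      Finset.mem_singleton, Finset.erase_eq_empty_iff]
    constructor
    · rintro ⟨_, h | h⟩
      · exact Or.inl h
      · exact Or.inr h
    · rintro (h | h)
      · subst h; exact ⟨Finset.empty_subset _, Or.inl rfl⟩
      · subst h; exact ⟨Finset.singleton_subset_iff.mpr he, Or.inr rfl⟩
  rw [hfe]
  rw [Finset.sum_insert (by
    simp only [Finset.mem_singleton]
    exact fun h => (Finset.singleton_ne_empty e) h.symm), Finset.sum_singleton]
  simp [rkEmpty hcard]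

end ContrBeta
section Key
variable {α : Type*} [DecidableEq α]

/-- max of `w` on `J`, or `0` if `J = ∅`. -/
noncomputable def maxOnF (w : α → ℝ) (J : Finset α) : ℝ :=
  if h : J.Nonempty then J.sup' h w else 0

lemma maxOn_eq_sup' (w : α → ℝ) {J : Finset α} (h : J.Nonempty) :
    maxOnF w J = J.sup' h w := dif_pos h

def Bases (E : Finset α) (r : Finset α → ℕ) : Finset (Finset α) :=
  E.powerset.filter (fun B => B.card = r E ∧ r B = r E)

noncomputable def Ysum (E : Finset α) (r : Finset α → ℕ) (w : α → ℝ) : ℝ :=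
  ∑ A ∈ E.powerset.filter (· ≠ E), (betaT (E \ A) (contr r A) : ℝ) * maxOnF w (E \ A)

lemma betaT_congr {G : Finset α} {ρ ρ' : Finset α → ℕ}
    (h : ∀ X ∈ G.powerset, ρ X = ρ' X) : betaT G ρ = betaT G ρ' := by
  rw [betaT_eq, betaT_eq]
  exact Finset.sum_congr rfl fun X hX => by rw [h X hX]

lemma Yrec {r : Finset α → ℕ}
    (hcard : ∀ A, r A ≤ A.card)
    (hmono : ∀ A B, A ⊆ B → r A ≤ r B)
    {E : Finset α} {e : α} (he : e ∈ E) {w : α → ℝ}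
    (hemax : ∀ x ∈ E, w x ≤ w e) :
    Ysum E r w = w e * (r {e} : ℝ) + Ysum (E.erase e) (contr r {e}) w := by
  classical
  unfold Ysum
  rw [← Finset.sum_filter_add_sum_filter_not (E.powerset.filter (· ≠ E)) (fun A => e ∉ A)]
  congr 1
  · -- sum over A with e ∉ A
    have hP0 : (E.powerset.filter (· ≠ E)).filter (fun A => e ∉ A) = (E.erase e).powerset := by
      ext A
      simp only [Finset.mem_filter, Finset.mem_powerset]
      constructor
      · rintro ⟨⟨hAE, _⟩, heA⟩
        exact Finset.subset_erase.mpr ⟨hAE, heA⟩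
      · intro hA
        obtain ⟨h1, h2⟩ := Finset.subset_erase.mp hA
        exact ⟨⟨h1, fun h => h2 (h ▸ he)⟩, h2⟩
    rw [hP0]
    have hterm : ∀ A ∈ (E.erase e).powerset,
        (betaT (E \ A) (contr r A) : ℝ) * maxOnF w (E \ A)
          = (betaT (E \ A) (contr r A) : ℝ) * w e := by
      intro A hA
      rw [Finset.mem_powerset] at hA
      have heA : e ∈ E \ A := Finset.mem_sdiff.mpr
        ⟨he, fun h => (Finset.mem_erase.mp (hA h)).1 rfl⟩
      have hne : (E \ A).Nonempty := ⟨e, heA⟩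
      rw [maxOn_eq_sup' w hne]
      congr 1
      apply le_antisymm
      · exact Finset.sup'_le _ _ fun x hx => hemax x (Finset.mem_sdiff.mp hx).1
      · exact Finset.le_sup' w heA
    rw [Finset.sum_congr rfl hterm, ← Finset.sum_mul]
    have : ∑ A ∈ (E.erase e).powerset, (betaT (E \ A) (contr r A) : ℝ) = (r {e} : ℝ) := by
      have := betaSum (r := r) hcard hmono he
      exact_mod_cast congrArg (Int.cast : ℤ → ℝ) this
    rw [this]
    ring
  · -- sum over A with e ∈ A
    refine Finset.sum_nbij' (fun A => A.erase e) (fun A' => insert e A') ?_ ?_ ?_ ?_ ?_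
    · intro A hA
      simp only [Finset.mem_filter, Finset.mem_powerset, not_not] at hA
      obtain ⟨⟨hAE, hAne⟩, heA⟩ := hA
      simp only [Finset.mem_filter, Finset.mem_powerset]
      refine ⟨Finset.erase_subset_erase e hAE, fun h => hAne ?_⟩
      have := congrArg (insert e) h
      rwa [Finset.insert_erase heA, Finset.insert_erase he] at this
    · intro A' hA'
      simp only [Finset.mem_filter, Finset.mem_powerset] at hA'
      obtain ⟨hA'E, hA'ne⟩ := hA'
      have heA' : e ∉ A' := fun h => (Finset.mem_erase.mp (hA'E h)).1 rfl
      simp only [Finset.mem_filter, Finset.mem_powerset, not_not]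
      refine ⟨⟨Finset.insert_subset he (hA'E.trans (Finset.erase_subset _ _)), fun h => hA'ne ?_⟩,
        Finset.mem_insert_self _ _⟩
      have := congrArg (fun S => Finset.erase S e) h
      simpa [Finset.erase_insert heA'] using this
    · intro A hA
      simp only [Finset.mem_filter, not_not] at hA
      exact Finset.insert_erase hA.2
    · intro A' hA'
      simp only [Finset.mem_filter, Finset.mem_powerset] at hA'
      have heA' : e ∉ A' := fun h => (Finset.mem_erase.mp (hA'.1 h)).1 rfl
      exact Finset.erase_insert heA'
    · intro A hA
      simp only [Finset.mem_filter, not_not] at hA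
      have heA : e ∈ A := hA.2
      have hseteq : E \ A = E.erase e \ A.erase e := by
        ext x
        simp only [Finset.mem_sdiff, Finset.mem_erase]
        constructor
        · rintro ⟨hx1, hx2⟩
          exact ⟨⟨fun h => hx2 (h ▸ heA), hx1⟩, fun h => hx2 h.2⟩
        · rintro ⟨⟨hxe, hx1⟩, hx2⟩
          exact ⟨hx1, fun h => hx2 ⟨hxe, h⟩⟩
      rw [← hseteq]
      congr 2
      apply betaT_congr
      intro X _
      exact (contr_contr hmono heA X).symm
end Key
section KeyThm
variable {α : Type*} [DecidableEq α]

lemma mem_Bases {E B : Finset α} {r : Finset α → ℕ} :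
    B ∈ Bases E r ↔ B ⊆ E ∧ B.card = r E ∧ r B = r E := by
  simp [Bases, Finset.mem_filter, Finset.mem_powerset, and_assoc]

theorem KEY (E : Finset α) :
    ∀ (r : Finset α → ℕ), (∀ A, r A ≤ A.card) → (∀ A B, A ⊆ B → r A ≤ r B) →
    (∀ A B, r (A ∪ B) + r (A ∩ B) ≤ r A + r B) → ∀ (w : α → ℝ),
    ∃ B ∈ Bases E r, (∀ B' ∈ Bases E r, ∑ i ∈ B', w i ≤ ∑ i ∈ B, w i) ∧
      ∑ i ∈ B, w i = Ysum E r w := by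
  induction E using Finset.strongInduction with
  | _ E ih =>
  intro r hcard hmono hsub w
  by_cases hE0 : E = ∅
  · subst hE0
    refine ⟨∅, mem_Bases.mpr ⟨Finset.Subset.rfl, by simp [rkEmpty hcard], rfl⟩, ?_, ?_⟩
    · intro B' hB'
      have := (mem_Bases.mp hB').1
      rw [Finset.subset_empty.mp this]
    · have hfil : (∅ : Finset α).powerset.filter (· ≠ ∅) = ∅ := by
        ext A; simp
      unfold Ysum
      rw [hfil]
      simp
  · obtain ⟨e, he, hemax⟩ := Finset.exists_max_image E w (Finset.nonempty_of_ne_empty hE0)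
    set E' := E.erase e with hE'def
    set r' := contr r {e} with hr'def
    have hcard' : ∀ A, r' A ≤ A.card := contr_card hcard hsub {e}
    have hmono' : ∀ A B, A ⊆ B → r' A ≤ r' B := contr_mono hmono {e}
    have hsub' : ∀ A B, r' (A ∪ B) + r' (A ∩ B) ≤ r' A + r' B := contr_sub hmono hsub {e}
    obtain ⟨B', hB'mem, hB'opt, hB'val⟩ :=
      ih E' (Finset.erase_ssubset he) r' hcard' hmono' hsub' w
    obtain ⟨hB'sub, hB'card, hB'rank⟩ := mem_Bases.mp hB'mem
    have heB' : e ∉ B' := fun h => (Finset.mem_erase.mp (hB'sub h)).1 rfl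
    have hB'E : B' ⊆ E := hB'sub.trans (Finset.erase_subset _ _)
    have hunion : {e} ∪ E' = E := by
      rw [hE'def, ← Finset.insert_eq, Finset.insert_erase he]
    have hre1 : r {e} ≤ r E := hmono _ _ (Finset.singleton_subset_iff.mpr he)
    have hrE' : r' E' + r {e} = r E := by
      have h1 : r {e} ≤ r ({e} ∪ E') := hmono _ _ Finset.subset_union_left
      have : r' E' = r ({e} ∪ E') - r {e} := rfl
      rw [this, hunion] at *
      omega
    have hYrec : Ysum E r w = w e * (r {e} : ℝ) + Ysum E' r' w :=
      Yrec hcard hmono he hemax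
    have hre : r {e} ≤ 1 := rkSingle hcard e
    rcases Nat.le_one_iff_eq_zero_or_eq_one.mp hre with hre0 | hre0
    · -- r {e} = 0 : e is a loop
      have hloop : ∀ X, r' X = r X := by
        intro X
        have : r' X = r ({e} ∪ X) - r {e} := rfl
        rw [this, rkLoop hmono hsub hre0 X, hre0]
        omega
      have hrEE' : r E' = r E := by
        have := hrE'
        rw [hloop E', hre0] at this
        omega
      have hBmem : B' ∈ Bases E r := by
        refine mem_Bases.mpr ⟨hB'E, ?_, ?_⟩
        · rw [hB'card, hloop E', hrEE']
        · rw [← hloop B', hB'rank, hloop E', hrEE']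
      refine ⟨B', hBmem, ?_, ?_⟩
      · intro B'' hB''
        obtain ⟨hB''E, hB''card, hB''rank⟩ := mem_Bases.mp hB''
        have heB'' : e ∉ B'' := by
          intro hmem
          have hind : r B'' = B''.card := by rw [hB''rank, hB''card]
          have := rkIndepSubset hcard hsub hind (Finset.singleton_subset_iff.mpr hmem)
          simp [hre0] at this
        apply hB'opt
        refine mem_Bases.mpr ⟨Finset.subset_erase.mpr ⟨hB''E, heB''⟩, ?_, ?_⟩
        · rw [hB''card, hloop E', hrEE']
        · rw [hloop B'', hB''rank, hloop E', hrEE']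
      · rw [hB'val, hYrec, hre0]
        simp
    · -- r {e} = 1
      have hkey : ∀ X, r ({e} ∪ X) = r' X + 1 := by
        intro X
        have h1 : r {e} ≤ r ({e} ∪ X) := hmono _ _ Finset.subset_union_left
        have : r' X = r ({e} ∪ X) - r {e} := rfl
        rw [hre0] at h1
        omega
      have hrEpos : 1 ≤ r E := hre0 ▸ hre1
      have hBcard : (insert e B').card = r E := by
        rw [Finset.card_insert_of_notMem heB', hB'card]
        omega
      have hBrank : r (insert e B') = r E := by
        rw [Finset.insert_eq, hkey B', hB'rank]
        omega
      have hBmem : insert e B' ∈ Bases E r :=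
        mem_Bases.mpr ⟨Finset.insert_subset he hB'E, hBcard, hBrank⟩
      have hBsum : ∑ i ∈ insert e B', w i = w e + ∑ i ∈ B', w i :=
        Finset.sum_insert heB'
      -- claim 1 : any basis containing e is dominated
      have claim1 : ∀ B'' ∈ Bases E r, e ∈ B'' →
          ∑ i ∈ B'', w i ≤ ∑ i ∈ insert e B', w i := by
        intro B'' hB'' heB''
        obtain ⟨hB''E, hB''card, hB''rank⟩ := mem_Bases.mp hB''
        have hD : B''.erase e ∈ Bases E' r' := by
          refine mem_Bases.mpr ⟨Finset.erase_subset_erase e hB''E, ?_, ?_⟩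
          · rw [Finset.card_erase_of_mem heB'', hB''card]
            omega
          · have h1 : {e} ∪ B''.erase e = B'' := by
              rw [← Finset.insert_eq, Finset.insert_erase heB'']
            have h2 := hkey (B''.erase e)
            rw [h1, hB''rank] at h2
            omega
        have hsum2 : w e + ∑ i ∈ B''.erase e, w i = ∑ i ∈ B'', w i :=
          Finset.add_sum_erase B'' w heB''
        rw [← hsum2, hBsum]
        exact add_le_add_right (hB'opt _ hD) _
      refine ⟨insert e B', hBmem, ?_, ?_⟩
      · intro B'' hB''
        obtain ⟨hB''E, hB''card, hB''rank⟩ := mem_Bases.mp hB''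
        by_cases heB'' : e ∈ B''
        · exact claim1 B'' hB'' heB''
        · -- exchange argument
          set C := insert e B'' with hCdef
          have hCE : C ⊆ E := Finset.insert_subset he hB''E
          have hrC : r C = r E :=
            le_antisymm (hmono _ _ hCE)
              (hB''rank ▸ hmono _ _ (Finset.subset_insert _ _))
          have hnotall : ¬ ∀ b ∈ B'', r (C.erase b) + 1 ≤ r C := by
            intro hall
            have hdrop := rkDrops hsub C B'' hall (Finset.subset_insert _ _)
            have hCd : C \ B'' = {e} := by
              ext x
              simp only [hCdef, Finset.mem_sdiff, Finset.mem_insert, Finset.mem_singleton]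
              constructor
              · rintro ⟨h1 | h1, h2⟩
                · exact h1
                · exact absurd h1 h2
              · rintro rfl
                exact ⟨Or.inl rfl, heB''⟩
            rw [hCd, hrC, hB''card] at hdrop
            omega
          push_neg at hnotall
          obtain ⟨b, hb, hbineq⟩ := hnotall
          have hbe : b ≠ e := fun h => heB'' (h ▸ hb)
          have heC : e ∈ C := Finset.mem_insert_self _ _
          have hbC : b ∈ C := Finset.mem_insert_of_mem hb
          have hB3card : (C.erase b).card = r E := by
            rw [Finset.card_erase_of_mem hbC, hCdef,
              Finset.card_insert_of_notMem heB'', hB''card]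
            omega
          have hB3rank : r (C.erase b) = r E := by
            refine le_antisymm (hmono _ _ ((Finset.erase_subset _ _).trans hCE)) ?_
            rw [← hrC]
            omega
          have hB3mem : C.erase b ∈ Bases E r :=
            mem_Bases.mpr ⟨(Finset.erase_subset _ _).trans hCE, hB3card, hB3rank⟩
          have heB3 : e ∈ C.erase b := Finset.mem_erase.mpr ⟨fun h => hbe h.symm, heC⟩
          have hstep : ∑ i ∈ B'', w i ≤ ∑ i ∈ C.erase b, w i := by
            have hCe : C.erase b = insert e (B''.erase b) := by
              rw [hCdef, Finset.erase_insert_of_ne (fun h => hbe h.symm)]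
            have heBb : e ∉ B''.erase b := fun h => heB'' (Finset.mem_of_mem_erase h)
            rw [hCe, Finset.sum_insert heBb, ← Finset.add_sum_erase B'' w hb]
            exact add_le_add_left (hemax b (hB''E hb)) _
          exact le_trans hstep (claim1 _ hB3mem heB3)
      · rw [hBsum, hB'val, hYrec, hre0]
        push_cast
        ring
end KeyThm
section ConvexPart
variable {α : Type*} [DecidableEq α]

lemma indic_eq_sum (B : Finset α) : indic B = ∑ i ∈ B, Pi.single i (1 : ℝ) := by
  funext a
  rw [Finset.sum_apply]
  simp only [indic, Pi.single_apply]
  rw [Finset.sum_ite_eq B a (fun _ => (1 : ℝ))]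

lemma matroidPolytope_eq_conv (E : Finset α) (r : Finset α → ℕ) :
    matroidPolytope E r = convexHull ℝ (((Bases E r).image indic : Finset (α → ℝ)) :
      Set (α → ℝ)) := by
  unfold matroidPolytope
  congr 1
  ext x
  simp only [Set.mem_setOf_eq, Finset.coe_image, Set.mem_image, Finset.mem_coe, mem_Bases]
  constructor
  · rintro ⟨B, h1, h2, h3, rfl⟩
    exact ⟨B, ⟨h1, h2, h3⟩, rfl⟩
  · rintro ⟨B, ⟨h1, h2, h3⟩, rfl⟩
    exact ⟨B, h1, h2, h3, rfl⟩

lemma simplexFace_eq_conv (J : Finset α) :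
    simplexFace J = convexHull ℝ ((J.image (fun i => Pi.single i (1 : ℝ)) : Finset (α → ℝ)) :
      Set (α → ℝ)) := by
  unfold simplexFace
  congr 1
  ext x
  simp only [Set.mem_setOf_eq, Finset.coe_image, Set.mem_image, Finset.mem_coe]
  constructor
  · rintro ⟨i, hi, rfl⟩; exact ⟨i, hi, rfl⟩
  · rintro ⟨i, hi, rfl⟩; exact ⟨i, hi, rfl⟩

lemma coe_finset_sum {β : Type*} (s : Finset β) (F : β → Finset (α → ℝ)) :
    ((∑ b ∈ s, F b : Finset (α → ℝ)) : Set (α → ℝ)) = ∑ b ∈ s, ((F b : Set (α → ℝ))) := by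
  induction s using Finset.cons_induction with
  | empty => simp
  | cons b s hb ih =>
    rw [Finset.sum_cons, Finset.sum_cons, Finset.coe_add, ih]

lemma finset_sum_nonempty {β : Type*} (s : Finset β) (F : β → Finset (α → ℝ))
    (h : ∀ b ∈ s, (F b).Nonempty) : (∑ b ∈ s, F b).Nonempty := by
  induction s using Finset.cons_induction with
  | empty => exact ⟨0, by simp⟩
  | cons b s hb ih =>
    rw [Finset.sum_cons]
    exact (h b (Finset.mem_cons_self _ _)).add (ih fun c hc => h c (Finset.mem_cons_of_mem hc))

lemma sup'_finset_add (f : (α → ℝ) →L[ℝ] ℝ) {V W : Finset (α → ℝ)}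
    (hV : V.Nonempty) (hW : W.Nonempty) :
    (V + W).sup' (hV.add hW) (fun x => f x) = V.sup' hV (fun x => f x) + W.sup' hW (fun x => f x) := by
  apply le_antisymm
  · apply Finset.sup'_le
    intro x hx
    obtain ⟨v, hv, w', hw', rfl⟩ := Finset.mem_add.mp hx
    rw [map_add]
    exact add_le_add (Finset.le_sup' _ hv) (Finset.le_sup' _ hw')
  · obtain ⟨v, hv, hveq⟩ := Finset.exists_mem_eq_sup' hV (fun x => f x)
    obtain ⟨w', hw', hweq⟩ := Finset.exists_mem_eq_sup' hW (fun x => f x)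
    rw [hveq, hweq, ← map_add]
    exact Finset.le_sup' (fun x => f x) (Finset.add_mem_add hv hw')

lemma sup'_finset_smul (f : (α → ℝ) →L[ℝ] ℝ) {V : Finset (α → ℝ)} {c : ℝ}
    (hc : 0 ≤ c) (hV : V.Nonempty) :
    (c • V).sup' (hV.smul_finset) (fun x => f x) = c * V.sup' hV (fun x => f x) := by
  apply le_antisymm
  · apply Finset.sup'_le
    intro x hx
    obtain ⟨v, hv, rfl⟩ := Finset.mem_smul_finset.mp hx
    rw [map_smul, smul_eq_mul]
    exact mul_le_mul_of_nonneg_left (Finset.le_sup' _ hv) hc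
  · obtain ⟨v, hv, hveq⟩ := Finset.exists_mem_eq_sup' hV (fun x => f x)
    rw [hveq, ← smul_eq_mul, ← map_smul]
    exact Finset.le_sup' (fun x => f x) (Finset.smul_mem_smul_finset hv)

/-- conditional sup of a linear functional over a finset of vectors -/
noncomputable def msup (f : (α → ℝ) →L[ℝ] ℝ) (V : Finset (α → ℝ)) : ℝ :=
  if h : V.Nonempty then V.sup' h (fun x => f x) else 0

lemma msup_eq_sup' (f : (α → ℝ) →L[ℝ] ℝ) {V : Finset (α → ℝ)} (h : V.Nonempty) :
    msup f V = V.sup' h (fun x => f x) := dif_pos h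

lemma msup_add (f : (α → ℝ) →L[ℝ] ℝ) {V W : Finset (α → ℝ)}
    (hV : V.Nonempty) (hW : W.Nonempty) :
    msup f (V + W) = msup f V + msup f W := by
  rw [msup_eq_sup' f hV, msup_eq_sup' f hW, msup_eq_sup' f (hV.add hW)]
  exact sup'_finset_add f hV hW

lemma msup_smul (f : (α → ℝ) →L[ℝ] ℝ) {V : Finset (α → ℝ)} {c : ℝ}
    (hc : 0 ≤ c) (hV : V.Nonempty) :
    msup f (c • V) = c * msup f V := by
  rw [msup_eq_sup' f hV, msup_eq_sup' f (hV.smul_finset)]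
  exact sup'_finset_smul f hc hV

lemma msup_sum {β : Type*} (f : (α → ℝ) →L[ℝ] ℝ) (s : Finset β) (F : β → Finset (α → ℝ))
    (h : ∀ b ∈ s, (F b).Nonempty) :
    msup f (∑ b ∈ s, F b) = ∑ b ∈ s, msup f (F b) := by
  induction s using Finset.cons_induction with
  | empty =>
    simp only [Finset.sum_empty]
    have h0 : msup f (0 : Finset (α → ℝ)) = f 0 := by
      rw [show (0 : Finset (α → ℝ)) = {0} from rfl,
        msup_eq_sup' f ⟨0, Finset.mem_singleton_self 0⟩, Finset.sup'_singleton]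
    rw [h0, map_zero]
  | cons b s hb ih =>
    rw [Finset.sum_cons, Finset.sum_cons,
      msup_add f (h b (Finset.mem_cons_self _ _))
        (finset_sum_nonempty s F fun c hc => h c (Finset.mem_cons_of_mem hc)),
      ih fun c hc => h c (Finset.mem_cons_of_mem hc)]

lemma conv_le_of_msup {V W : Finset (α → ℝ)} (hW : W.Nonempty)
    (h : ∀ f : (α → ℝ) →L[ℝ] ℝ, ∀ x ∈ V, ∃ y ∈ W, f x ≤ f y) :
    convexHull ℝ (V : Set (α → ℝ)) ⊆ convexHull ℝ (W : Set (α → ℝ)) := by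
  refine convexHull_min ?_ (convex_convexHull ℝ _)
  intro x hx
  by_contra hxW
  have hcl : IsClosed (convexHull ℝ (W : Set (α → ℝ))) :=
    (W.finite_toSet).isClosed_convexHull ℝ
  obtain ⟨f, u, hfa, hfx⟩ :=
    geometric_hahn_banach_closed_point (convex_convexHull ℝ _) hcl hxW
  obtain ⟨y, hyW, hxy⟩ := h f x hx
  have hyu : f y < u := hfa y (subset_convexHull ℝ _ hyW)
  linarith

lemma conv_eq_of_msup {V W : Finset (α → ℝ)} (hV : V.Nonempty) (hW : W.Nonempty)
    (h : ∀ f : (α → ℝ) →L[ℝ] ℝ, msup f V = msup f W) :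
    convexHull ℝ (V : Set (α → ℝ)) = convexHull ℝ (W : Set (α → ℝ)) := by
  apply Set.Subset.antisymm
  · refine conv_le_of_msup hW fun f x hx => ?_
    obtain ⟨y, hy, hyeq⟩ := Finset.exists_mem_eq_sup' hW (fun x => f x)
    refine ⟨y, hy, ?_⟩
    calc f x ≤ V.sup' hV (fun x => f x) := Finset.le_sup' _ hx
      _ = msup f V := (msup_eq_sup' f hV).symm
      _ = msup f W := h f
      _ = W.sup' hW (fun x => f x) := msup_eq_sup' f hW
      _ = f y := hyeq
  · refine conv_le_of_msup hV fun f x hx => ?_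
    obtain ⟨y, hy, hyeq⟩ := Finset.exists_mem_eq_sup' hV (fun x => f x)
    refine ⟨y, hy, ?_⟩
    calc f x ≤ W.sup' hW (fun x => f x) := Finset.le_sup' _ hx
      _ = msup f W := (msup_eq_sup' f hW).symm
      _ = msup f V := (h f).symm
      _ = V.sup' hV (fun x => f x) := msup_eq_sup' f hV
      _ = f y := hyeq

end ConvexPart
section Final
variable {α : Type*} [DecidableEq α]

lemma msup_VF (f : (α → ℝ) →L[ℝ] ℝ) {J : Finset α} (hJ : J.Nonempty) :
    msup f (J.image (fun i => Pi.single i (1 : ℝ)))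
      = maxOnF (fun i => f (Pi.single i (1 : ℝ))) J := by
  rw [msup_eq_sup' f (hJ.image _), maxOn_eq_sup' _ hJ]
  rw [Finset.sup'_image]
  rfl

theorem matroidPolytope_signed_sum' {α : Type*} [DecidableEq α]
    (E : Finset α) (r : Finset α → ℕ)
    (hcard : ∀ A, r A ≤ A.card)
    (hmono : ∀ A B, A ⊆ B → r A ≤ r B)
    (hsub : ∀ A B, r (A ∪ B) + r (A ∩ B) ≤ r A + r B)
    (hE : ∀ A, r (A ∩ E) = r A) :
    matroidPolytope E r +
        ∑ A ∈ E.powerset.filter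
            (fun A => A ≠ E ∧ betaT (E \ A) (contr r A) < 0),
          (-(betaT (E \ A) (contr r A) : ℝ)) • simplexFace (E \ A)
      = ∑ A ∈ E.powerset.filter
            (fun A => A ≠ E ∧ 0 ≤ betaT (E \ A) (contr r A)),
          ((betaT (E \ A) (contr r A) : ℝ)) • simplexFace (E \ A) := by
  classical
  set negs := E.powerset.filter (fun A => A ≠ E ∧ betaT (E \ A) (contr r A) < 0) with hnegs
  set poss := E.powerset.filter (fun A => A ≠ E ∧ 0 ≤ betaT (E \ A) (contr r A)) with hposs
  -- nonemptiness facts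
  obtain ⟨B0, hB0, _, _⟩ := KEY E r hcard hmono hsub (fun _ => 0)
  have hBasesne : (Bases E r).Nonempty := ⟨B0, hB0⟩
  have h_BFne : ((Bases E r).image indic).Nonempty := hBasesne.image _
  have hEA : ∀ A : Finset α, A ∈ E.powerset → A ≠ E → (E \ A).Nonempty := by
    intro A hA hne
    rw [Finset.mem_powerset] at hA
    exact Finset.sdiff_nonempty.mpr fun h => hne (Finset.Subset.antisymm hA h)
  have hVFnegs : ∀ A ∈ negs, ((-(betaT (E \ A) (contr r A) : ℝ)) • ((E \ A).image (fun i => Pi.single i (1 : ℝ)))).Nonempty := by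
    intro A hA
    rw [hnegs, Finset.mem_filter] at hA
    exact ((hEA A hA.1 hA.2.1).image _).smul_finset
  have hVFposs : ∀ A ∈ poss, (((betaT (E \ A) (contr r A) : ℝ)) • ((E \ A).image (fun i => Pi.single i (1 : ℝ)))).Nonempty := by
    intro A hA
    rw [hposs, Finset.mem_filter] at hA
    exact ((hEA A hA.1 hA.2.1).image _).smul_finset
  have hsumnegs : (∑ A ∈ negs, (-(betaT (E \ A) (contr r A) : ℝ)) • ((E \ A).image (fun i => Pi.single i (1 : ℝ)))).Nonempty :=
    finset_sum_nonempty _ _ hVFnegs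
  have hSL : (((Bases E r).image indic) + ∑ A ∈ negs, (-(betaT (E \ A) (contr r A) : ℝ)) • ((E \ A).image (fun i => Pi.single i (1 : ℝ)))).Nonempty := h_BFne.add hsumnegs
  have hSR : (∑ A ∈ poss, ((betaT (E \ A) (contr r A) : ℝ)) • ((E \ A).image (fun i => Pi.single i (1 : ℝ)))).Nonempty :=
    finset_sum_nonempty _ _ hVFposs
  -- rewrite both sides as convex hulls of finite vertex sets
  have hLHS : matroidPolytope E r +
      ∑ A ∈ negs, (-(betaT (E \ A) (contr r A) : ℝ)) • simplexFace (E \ A)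
        = convexHull ℝ (((((Bases E r).image indic) + ∑ A ∈ negs, (-(betaT (E \ A) (contr r A) : ℝ)) • ((E \ A).image (fun i => Pi.single i (1 : ℝ)))) :
            Finset (α → ℝ)) : Set (α → ℝ)) := by
    rw [Finset.coe_add, convexHull_add, coe_finset_sum, convexHull_sum,
      matroidPolytope_eq_conv E r]
    congr 1
    refine Finset.sum_congr rfl fun A _ => ?_
    rw [simplexFace_eq_conv, Finset.coe_smul_finset, convexHull_smul]
  have hRHS : ∑ A ∈ poss, ((betaT (E \ A) (contr r A) : ℝ)) • simplexFace (E \ A)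
        = convexHull ℝ (((∑ A ∈ poss, ((betaT (E \ A) (contr r A) : ℝ)) • ((E \ A).image (fun i => Pi.single i (1 : ℝ)))) :
            Finset (α → ℝ)) : Set (α → ℝ)) := by
    rw [coe_finset_sum, convexHull_sum]
    refine Finset.sum_congr rfl fun A _ => ?_
    rw [simplexFace_eq_conv, Finset.coe_smul_finset, convexHull_smul]
  rw [hLHS, hRHS]
  -- reduce to equality of support functions
  apply conv_eq_of_msup hSL hSR
  intro f
  set w : α → ℝ := fun i => f (Pi.single i (1 : ℝ)) with hw
  -- value of msup on the basis polytope vertices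
  have hmsupBF : msup f ((Bases E r).image indic) = Ysum E r w := by
    obtain ⟨Bopt, hBopt, hopt, hval⟩ := KEY E r hcard hmono hsub w
    have hfind : ∀ B : Finset α, f (indic B) = ∑ i ∈ B, w i := by
      intro B
      rw [indic_eq_sum, map_sum]
    rw [msup_eq_sup' f h_BFne, Finset.sup'_image]
    apply le_antisymm
    · apply Finset.sup'_le
      intro B hB
      show f (indic B) ≤ Ysum E r w
      rw [hfind B, ← hval]
      exact hopt B hB
    · rw [← hval, ← hfind Bopt]
      exact Finset.le_sup' (fun B => f (indic B)) hBopt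
  -- compute both sides
  rw [msup_add f h_BFne hsumnegs, msup_sum f negs _ hVFnegs, msup_sum f poss _ hVFposs,
    hmsupBF]
  have hterm_negs : ∀ A ∈ negs, msup f ((-(betaT (E \ A) (contr r A) : ℝ)) • ((E \ A).image (fun i => Pi.single i (1 : ℝ))))
      = (-(betaT (E \ A) (contr r A) : ℝ)) * maxOnF w (E \ A) := by
    intro A hA
    rw [hnegs, Finset.mem_filter] at hA
    have hne := hEA A hA.1 hA.2.1
    have hcpos : (0 : ℝ) ≤ -(betaT (E \ A) (contr r A) : ℝ) := by
      have h2 := hA.2.2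
      have : (betaT (E \ A) (contr r A) : ℝ) ≤ 0 := by exact_mod_cast h2.le
      linarith
    rw [msup_smul f hcpos (hne.image _), msup_VF f hne]
  have hterm_poss : ∀ A ∈ poss, msup f (((betaT (E \ A) (contr r A) : ℝ)) • ((E \ A).image (fun i => Pi.single i (1 : ℝ))))
      = ((betaT (E \ A) (contr r A) : ℝ)) * maxOnF w (E \ A) := by
    intro A hA
    rw [hposs, Finset.mem_filter] at hA
    have hne := hEA A hA.1 hA.2.1
    have hcpos : (0 : ℝ) ≤ (betaT (E \ A) (contr r A) : ℝ) := by
      exact_mod_cast hA.2.2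
    rw [msup_smul f hcpos (hne.image _), msup_VF f hne]
  rw [Finset.sum_congr rfl hterm_negs, Finset.sum_congr rfl hterm_poss]
  -- final scalar identity
  have hY : Ysum E r w = ∑ A ∈ poss, (betaT (E \ A) (contr r A) : ℝ) * maxOnF w (E \ A)
      + ∑ A ∈ negs, (betaT (E \ A) (contr r A) : ℝ) * maxOnF w (E \ A) := by
    unfold Ysum
    rw [← Finset.sum_filter_add_sum_filter_not (E.powerset.filter (· ≠ E))
      (fun A => 0 ≤ betaT (E \ A) (contr r A))]
    congr 1
    · rw [hposs, Finset.filter_filter]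
    · rw [hnegs, Finset.filter_filter]
      apply Finset.sum_congr
      · apply Finset.filter_congr
        intro A _
        simp [not_le]
      · intros; rfl
  rw [hY]
  have hzero : ∑ A ∈ negs, (betaT (E \ A) (contr r A) : ℝ) * maxOnF w (E \ A)
      + ∑ A ∈ negs, (-(betaT (E \ A) (contr r A) : ℝ)) * maxOnF w (E \ A) = 0 := by
    rw [← Finset.sum_add_distrib]
    apply Finset.sum_eq_zero
    intros
    ring
  linarith

end Final

/-- Theorem 2.6: `P_M = ∑_{A⊆E} β̃(M/A) Δ_{E−A}` as a signed Minkowski sum, i.e.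
`P_M + ∑_{β̃(M/A)<0} (−β̃(M/A)) Δ_{E−A} = ∑_{β̃(M/A)≥0} β̃(M/A) Δ_{E−A}`. -/
theorem matroidPolytope_signed_sum {α : Type*} [DecidableEq α]
    (E : Finset α) (r : Finset α → ℕ)
    (hcard : ∀ A, r A ≤ A.card)
    (hmono : ∀ A B, A ⊆ B → r A ≤ r B)
    (hsub : ∀ A B, r (A ∪ B) + r (A ∩ B) ≤ r A + r B)
    (hE : ∀ A, r (A ∩ E) = r A) :
    matroidPolytope E r +
        ∑ A ∈ E.powerset.filter
            (fun A => A ≠ E ∧ betaT (E \ A) (contr r A) < 0),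
          (-(betaT (E \ A) (contr r A) : ℝ)) • simplexFace (E \ A)
      = ∑ A ∈ E.powerset.filter
            (fun A => A ≠ E ∧ 0 ≤ betaT (E \ A) (contr r A)),
          ((betaT (E \ A) (contr r A) : ℝ)) • simplexFace (E \ A) := by
  exact matroidPolytope_signed_sum' E r hcard hmono hsub hE
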